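/- Let S be a decision rule system with n(S) > 0 and let C ∈ {AR, EAR, EAD, ESR}. Then h_C(S) ≥ β_C(S) ≥ β_C⁺(S). -/

import Mathlib

/- Common formal framework for decision rule systems and decision trees /
   acyclic decision graphs, following Durdymyradov & Moshkov. -/

attribute [local instance] Classical.propDecidable

noncomputable section

namespace DRS

/-- A decision rule `(a_{i₁}=δ₁) ∧ ⋯ ∧ (a_{i_m}=δ_m) → σ`:
`K` is the finite set of equations (attribute index, value), `rhs` is σ. -/
structure Rule where
  K : Finset (ℕ × ℕ)
  rhs : ℕ

/-- Well-formedness of a rule: the attributes on its left-hand side are pairwise different. -/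
def Rule.WF (r : Rule) : Prop := ∀ p ∈ r.K, ∀ q ∈ r.K, p.1 = q.1 → p = q

/-- A(r): the set of attributes of a rule. -/
def Rule.attrs (r : Rule) : Finset ℕ := r.K.image Prod.fst

/-- The length m of a rule. -/
def Rule.len (r : Rule) : ℕ := r.K.card

/-- A(S) -/
def attrs (S : Finset Rule) : Finset ℕ := S.biUnion Rule.attrs

/-- n(S) -/
def nPar (S : Finset Rule) : ℕ := (attrs S).card

/-- d(S): the maximum length of a rule of S. -/
def dPar (S : Finset Rule) : ℕ := S.sup Rule.len

/-- D(S): the set of right-hand sides. -/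
def rhsSet (S : Finset Rule) : Finset ℕ := S.image Rule.rhs

/-- V_S(a_i) -/
def VS (S : Finset Rule) (i : ℕ) : Finset ℕ :=
  ((S.biUnion Rule.K).filter fun p => p.1 = i).image Prod.snd

/-- k(S) -/
def kPar (S : Finset Rule) : ℕ := (attrs S).sup fun i => (VS S i).card

/-- Attribute values in trees are `Option ℕ`; `none` plays the role of the special value `*`.
`allowed S false i` is (the lift of) `V_S(a_i)`, and `allowed S true i` is `EV_S(a_i)`. -/
def allowed (S : Finset Rule) (ext : Bool) (i : ℕ) : Finset (Option ℕ) :=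
  (VS S i).image some ∪ (if ext then {none} else ∅)

/-- Consistency of an equation system over ω ∪ {*}. -/
def ConsistentE (E : Finset (ℕ × Option ℕ)) : Prop :=
  ∀ p ∈ E, ∀ q ∈ E, p.1 = q.1 → p.2 = q.2

/-- Lift the left-hand side of a rule to an equation system over ω ∪ {*}. -/
def liftK (K : Finset (ℕ × ℕ)) : Finset (ℕ × Option ℕ) :=
  K.image fun p => (p.1, some p.2)

/-- A finite directed labeled graph: the nodes are `0, …, n-1`, with a distinguished root,
each node carries either an attribute (working node) or a set of rules (terminal node),
and edges are labeled with elements of ω ∪ {*}. -/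
structure DGraph where
  n : ℕ
  root : ℕ
  label : ℕ → ℕ ⊕ Finset Rule
  edges : Finset (ℕ × Option ℕ × ℕ)

namespace DGraph

def step (G : DGraph) (u v : ℕ) : Prop := ∃ l, (u, l, v) ∈ G.edges

/-- The graph has no directed cycles. -/
def Acyclic (G : DGraph) : Prop := ∀ v, ¬ Relation.TransGen G.step v v

/-- A node is terminal if no edge leaves it. -/
def IsTerminal (G : DGraph) (v : ℕ) : Prop := ∀ e ∈ G.edges, e.1 ≠ v

/-- The set of rules attached to a (terminal) node. -/
def termSet (G : DGraph) (v : ℕ) : Finset Rule :=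
  Sum.elim (fun _ => (∅ : Finset Rule)) id (G.label v)

/-- `G` is an acyclic decision graph over the rule system `S`;
`ext = false` : branching over `V_S` (o-type), `ext = true` : branching over `EV_S` (e-type).
Terminal nodes are labeled with subsets of S; each working node is labeled with an
attribute `a` of `A(S)` and has exactly one leaving edge for every element of
`V_S(a)` (resp. `EV_S(a)`), the edges leaving it being labeled with these
pairwise different elements. -/
def IsDG (G : DGraph) (S : Finset Rule) (ext : Bool) : Prop :=
  G.root < G.n ∧
  (∀ e ∈ G.edges, e.1 < G.n ∧ e.2.2 < G.n) ∧
  G.Acyclic ∧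
  (∀ v < G.n,
    if G.IsTerminal v then
      ∃ Z : Finset Rule, G.label v = Sum.inr Z ∧ Z ⊆ S
    else
      ∃ a : ℕ, G.label v = Sum.inl a ∧ a ∈ attrs S ∧
        (∀ l : Option ℕ, (∃ w, (v, l, w) ∈ G.edges) ↔ l ∈ allowed S ext a) ∧
        (∀ l w w', (v, l, w) ∈ G.edges → (v, l, w') ∈ G.edges → w = w'))

/-- `G` is a finite directed tree with root: the root has no entering edge and every
other node has exactly one entering edge (together with acyclicity this makes the
graph a rooted tree). -/
def IsTree (G : DGraph) : Prop :=
  (∀ e ∈ G.edges, e.2.2 ≠ G.root) ∧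
  (∀ v < G.n, v ≠ G.root → ∃! e, e ∈ G.edges ∧ e.2.2 = v)

/-- `chainFrom G v p t`: the list `p` of (node, leaving-edge-label) pairs forms a
directed path in `G` starting at `v` and ending at `t`. -/
def chainFrom (G : DGraph) : ℕ → List (ℕ × Option ℕ) → ℕ → Prop
  | v, [], t => v = t
  | v, e :: rest, t => e.1 = v ∧ ∃ w, (v, e.2, w) ∈ G.edges ∧ chainFrom G w rest t

/-- A complete path: from the root to a terminal node; it is recorded by the list of
its working nodes with the labels of the edges taken, together with its terminal node. -/
def IsCompletePath (G : DGraph) (p : List (ℕ × Option ℕ)) (t : ℕ) : Prop :=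
  G.chainFrom G.root p t ∧ G.IsTerminal t ∧ t < G.n

/-- K(ξ): the equation system associated with a complete path. -/
def pathEqs (G : DGraph) (p : List (ℕ × Option ℕ)) : Finset (ℕ × Option ℕ) :=
  (p.filterMap fun e =>
    Sum.elim (fun a => some (a, e.2)) (fun _ => none) (G.label e.1)).toFinset

/-- L(Γ): the number of nodes. -/
def size (G : DGraph) : ℕ := G.n

/-- T(Γ): the number of terminal nodes labeled with pairwise different sets of rules. -/
def tCount (G : DGraph) : ℕ :=
  (((Finset.range G.n).filter fun v => G.IsTerminal v).image fun v => G.termSet v).card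

/-- h(Γ): the maximum number of working nodes on a complete path. -/
def depth (G : DGraph) : ℕ :=
  sSup {m | ∃ p t, G.IsCompletePath p t ∧ p.length = m}

/-- Path conditions for (the solutions of) the problems All Rules / EAll Rules. -/
def SolvesAR (G : DGraph) (S : Finset Rule) : Prop :=
  ∀ p t, G.IsCompletePath p t → ConsistentE (G.pathEqs p) →
    (∀ r ∈ G.termSet t, liftK r.K ⊆ G.pathEqs p) ∧
    (∀ r ∈ S, r ∉ G.termSet t → ¬ ConsistentE (liftK r.K ∪ G.pathEqs p))

/-- Path conditions for the problems All Decisions / EAll Decisions. -/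
def SolvesAD (G : DGraph) (S : Finset Rule) : Prop :=
  ∀ p t, G.IsCompletePath p t → ConsistentE (G.pathEqs p) →
    (∀ r ∈ G.termSet t, liftK r.K ⊆ G.pathEqs p) ∧
    (∀ r ∈ S, r ∉ G.termSet t → r.rhs ∉ (G.termSet t).image Rule.rhs →
      ¬ ConsistentE (liftK r.K ∪ G.pathEqs p))

/-- Path conditions for the problems Some Rules / ESome Rules. -/
def SolvesSR (G : DGraph) (S : Finset Rule) : Prop :=
  ∀ p t, G.IsCompletePath p t → ConsistentE (G.pathEqs p) →
    (∀ r ∈ G.termSet t, liftK r.K ⊆ G.pathEqs p) ∧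
    (G.termSet t = ∅ → ∀ r ∈ S, ¬ ConsistentE (liftK r.K ∪ G.pathEqs p))

end DGraph

/-- Γ is a decision tree over S solving AR(S) (an o-tree). -/
def TreeSolvesAR (S : Finset Rule) (G : DGraph) : Prop :=
  G.IsDG S false ∧ G.IsTree ∧ G.SolvesAR S
/-- Γ is a decision tree over S solving EAR(S) (an e-tree). -/
def TreeSolvesEAR (S : Finset Rule) (G : DGraph) : Prop :=
  G.IsDG S true ∧ G.IsTree ∧ G.SolvesAR S
/-- Γ is a decision tree over S solving AD(S) (an o-tree). -/
def TreeSolvesAD (S : Finset Rule) (G : DGraph) : Prop :=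
  G.IsDG S false ∧ G.IsTree ∧ G.SolvesAD S
/-- Γ is a decision tree over S solving EAD(S) (an e-tree). -/
def TreeSolvesEAD (S : Finset Rule) (G : DGraph) : Prop :=
  G.IsDG S true ∧ G.IsTree ∧ G.SolvesAD S
/-- Γ is a decision tree over S solving SR(S) (an o-tree). -/
def TreeSolvesSR (S : Finset Rule) (G : DGraph) : Prop :=
  G.IsDG S false ∧ G.IsTree ∧ G.SolvesSR S
/-- Γ is a decision tree over S solving ESR(S) (an e-tree). -/
def TreeSolvesESR (S : Finset Rule) (G : DGraph) : Prop :=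
  G.IsDG S true ∧ G.IsTree ∧ G.SolvesSR S

/-- L_AR(S): minimum number of nodes of a decision tree over S solving AR(S). -/
def L_AR (S : Finset Rule) : ℕ := sInf {m | ∃ G : DGraph, TreeSolvesAR S G ∧ G.size = m}
def L_EAR (S : Finset Rule) : ℕ := sInf {m | ∃ G : DGraph, TreeSolvesEAR S G ∧ G.size = m}
def L_AD (S : Finset Rule) : ℕ := sInf {m | ∃ G : DGraph, TreeSolvesAD S G ∧ G.size = m}
def L_EAD (S : Finset Rule) : ℕ := sInf {m | ∃ G : DGraph, TreeSolvesEAD S G ∧ G.size = m}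
def L_SR (S : Finset Rule) : ℕ := sInf {m | ∃ G : DGraph, TreeSolvesSR S G ∧ G.size = m}
def L_ESR (S : Finset Rule) : ℕ := sInf {m | ∃ G : DGraph, TreeSolvesESR S G ∧ G.size = m}

/-- T_AR(S): minimum number of differently-labeled terminal nodes of a decision tree
over S solving AR(S); similarly for the other problems. -/
def T_AR (S : Finset Rule) : ℕ := sInf {m | ∃ G : DGraph, TreeSolvesAR S G ∧ G.tCount = m}
def T_EAR (S : Finset Rule) : ℕ := sInf {m | ∃ G : DGraph, TreeSolvesEAR S G ∧ G.tCount = m}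
def T_AD (S : Finset Rule) : ℕ := sInf {m | ∃ G : DGraph, TreeSolvesAD S G ∧ G.tCount = m}
def T_EAD (S : Finset Rule) : ℕ := sInf {m | ∃ G : DGraph, TreeSolvesEAD S G ∧ G.tCount = m}
def T_SR (S : Finset Rule) : ℕ := sInf {m | ∃ G : DGraph, TreeSolvesSR S G ∧ G.tCount = m}
def T_ESR (S : Finset Rule) : ℕ := sInf {m | ∃ G : DGraph, TreeSolvesESR S G ∧ G.tCount = m}

/-- h_AR(S): minimum depth of a decision tree over S solving AR(S); similarly for the others. -/
def h_AR (S : Finset Rule) : ℕ := sInf {m | ∃ G : DGraph, TreeSolvesAR S G ∧ G.depth = m}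
def h_EAR (S : Finset Rule) : ℕ := sInf {m | ∃ G : DGraph, TreeSolvesEAR S G ∧ G.depth = m}
def h_AD (S : Finset Rule) : ℕ := sInf {m | ∃ G : DGraph, TreeSolvesAD S G ∧ G.depth = m}
def h_EAD (S : Finset Rule) : ℕ := sInf {m | ∃ G : DGraph, TreeSolvesEAD S G ∧ G.depth = m}
def h_SR (S : Finset Rule) : ℕ := sInf {m | ∃ G : DGraph, TreeSolvesSR S G ∧ G.depth = m}
def h_ESR (S : Finset Rule) : ℕ := sInf {m | ∃ G : DGraph, TreeSolvesESR S G ∧ G.depth = m}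

/-- L^DG_SR(S): minimum number of nodes of an acyclic decision graph solving SR(S). -/
def LDG_SR (S : Finset Rule) : ℕ :=
  sInf {m | ∃ G : DGraph, G.IsDG S false ∧ G.SolvesSR S ∧ G.size = m}
/-- L^DG_ESR(S): minimum number of nodes of an acyclic decision graph solving ESR(S). -/
def LDG_ESR (S : Finset Rule) : ℕ :=
  sInf {m | ∃ G : DGraph, G.IsDG S true ∧ G.SolvesSR S ∧ G.size = m}

/-- A node cover of the hypergraph G(S). -/
def IsNodeCover (S : Finset Rule) (B : Finset ℕ) : Prop :=
  B ⊆ attrs S ∧ ∀ r ∈ S, (Rule.attrs r).Nonempty → (Rule.attrs r ∩ B).Nonempty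

/-- β(S): the minimum cardinality of a node cover of the hypergraph G(S). -/
def beta (S : Finset Rule) : ℕ := sInf {c | ∃ B, IsNodeCover S B ∧ B.card = c}

/-- S⁺: the subsystem of S consisting of all rules of length d(S). -/
def Splus (S : Finset Rule) : Finset Rule := S.filter fun r => r.len = dPar S

/-- β⁺(S) = β(S⁺). -/
def betaPlus (S : Finset Rule) : ℕ := beta (Splus S)

/-- The rule r_α : delete from the left-hand side of r all equations belonging to α. -/
def Rule.restrict (r : Rule) (α : Finset (ℕ × Option ℕ)) : Rule :=
  ⟨r.K.filter fun p => (p.1, some p.2) ∉ α, r.rhs⟩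

/-- S_α : the system of the rules r_α for all r ∈ S with K(r) ∪ α consistent. -/
def restrict (S : Finset Rule) (α : Finset (ℕ × Option ℕ)) : Finset Rule :=
  (S.filter fun r => ConsistentE (liftK r.K ∪ α)).image fun r => r.restrict α

/-- E_C(S): consistent equation systems whose attributes are in A(S) and whose
values belong to V_S (ext = false) resp. EV_S (ext = true). -/
def ESys (S : Finset Rule) (ext : Bool) : Set (Finset (ℕ × Option ℕ)) :=
  {α | ConsistentE α ∧ ∀ p ∈ α, p.1 ∈ attrs S ∧ p.2 ∈ allowed S ext p.1}

/-- I_SR(S). -/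
def I_SR (S : Finset Rule) : Finset Rule :=
  if ∃ r ∈ S, r.len = 0 then S.filter fun r => r.len = 0 else S

/-- D₀(S): the right-hand sides of the rules of S of length 0. -/
def D0 (S : Finset Rule) : Finset ℕ := (S.filter fun r => r.len = 0).image Rule.rhs

/-- I_AD(S). -/
def I_AD (S : Finset Rule) : Finset Rule :=
  S.filter fun r => r.len = 0 ∨ r.rhs ∉ D0 S

def betaC (S : Finset Rule) (ext : Bool) : ℕ :=
  sSup {b | ∃ α ∈ ESys S ext, beta (restrict S α) = b}
def betaCplus (S : Finset Rule) (ext : Bool) : ℕ :=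
  sSup {b | ∃ α ∈ ESys S ext, betaPlus (restrict S α) = b}
def betaI (S : Finset Rule) (I : Finset Rule → Finset Rule) : ℕ :=
  sSup {b | ∃ α ∈ ESys S true, beta (I (restrict S α)) = b}
def betaIplus (S : Finset Rule) (I : Finset Rule → Finset Rule) : ℕ :=
  sSup {b | ∃ α ∈ ESys S true, betaPlus (I (restrict S α)) = b}

def beta_AR (S : Finset Rule) : ℕ := betaC S false
def beta_AD (S : Finset Rule) : ℕ := betaC S false
def beta_SR (S : Finset Rule) : ℕ := betaC S false
def beta_EAR (S : Finset Rule) : ℕ := betaC S true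
def beta_ARplus (S : Finset Rule) : ℕ := betaCplus S false
def beta_ADplus (S : Finset Rule) : ℕ := betaCplus S false
def beta_SRplus (S : Finset Rule) : ℕ := betaCplus S false
def beta_EARplus (S : Finset Rule) : ℕ := betaCplus S true
def beta_EAD (S : Finset Rule) : ℕ := betaI S I_AD
def beta_EADplus (S : Finset Rule) : ℕ := betaIplus S I_AD
def beta_ESR (S : Finset Rule) : ℕ := betaI S I_SR
def beta_ESRplus (S : Finset Rule) : ℕ := betaIplus S I_SR

/-- R_SR(S). -/
def R_SR (S : Finset Rule) : Finset Rule :=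
  S.filter fun r => ¬ ∃ r' ∈ S, r'.K ⊂ r.K

/-- R_AD(S). -/
def R_AD (S : Finset Rule) : Finset Rule :=
  S.filter fun r => ¬ ∃ r' ∈ S, r'.K ⊂ r.K ∧ r'.rhs = r.rhs

/-- A reduced decision rule system. -/
def Reduced (S : Finset Rule) : Prop :=
  attrs S ⊆ Finset.range (nPar S + 1) ∧
  rhsSet S ⊆ Finset.range ((rhsSet S).card + 1) ∧
  (∀ i ∈ attrs S, VS S i ⊆ Finset.range (kPar S + 1)) ∧
  1 ≤ dPar S

/-- Length of the binary representation of a natural number. -/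
def bitLen (m : ℕ) : ℕ := max 1 (Nat.size m)

/-- The length of the word "(a⟨i⟩=⟨δ⟩)" encoding one equation. -/
def eqLen (p : ℕ × ℕ) : ℕ := 4 + bitLen p.1 + bitLen p.2

/-- The length of the word encoding one rule (with the "∧" signs and "→"). -/
def Rule.wordLen (r : Rule) : ℕ :=
  (∑ p ∈ r.K, eqLen p) + (r.K.card - 1) + 1 + bitLen r.rhs

/-- size(S): the length of the word representing S (with ";" separating the rules). -/
def sizeS (S : Finset Rule) : ℕ := (∑ r ∈ S, r.wordLen) + (S.card - 1)
-- ===================== Auxiliary lemmas =====================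

lemma consistentE_mono {E F : Finset (ℕ × Option ℕ)} (h : E ⊆ F) (hF : ConsistentE F) :
    ConsistentE E := fun p hp q hq => hF p (h hp) q (h hq)

lemma attrs_mono {T T' : Finset Rule} (h : T' ⊆ T) : attrs T' ⊆ attrs T := by
  intro a ha
  rcases Finset.mem_biUnion.1 ha with ⟨r, hr, har⟩
  exact Finset.mem_biUnion.2 ⟨r, h hr, har⟩

lemma isNodeCover_attrs (T : Finset Rule) : IsNodeCover T (attrs T) := by
  refine ⟨Finset.Subset.refl _, fun r hr hne => ?_⟩
  rcases hne with ⟨a, ha⟩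
  exact ⟨a, Finset.mem_inter.2 ⟨ha, Finset.mem_biUnion.2 ⟨r, hr, ha⟩⟩⟩

lemma beta_le_of_cover {T : Finset Rule} {B : Finset ℕ} (h : IsNodeCover T B) :
    beta T ≤ B.card := Nat.sInf_le ⟨B, h, rfl⟩

lemma beta_le_card_attrs (T : Finset Rule) : beta T ≤ (attrs T).card :=
  beta_le_of_cover (isNodeCover_attrs T)

lemma beta_mono {T T' : Finset Rule} (h : T' ⊆ T) : beta T' ≤ beta T := by
  have hne : {c | ∃ B, IsNodeCover T B ∧ B.card = c}.Nonempty :=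
    ⟨(attrs T).card, attrs T, isNodeCover_attrs T, rfl⟩
  obtain ⟨B, hB, hBc⟩ := Nat.sInf_mem hne
  have hcov : IsNodeCover T' (B ∩ attrs T') := by
    refine ⟨Finset.inter_subset_right, fun r hr hne' => ?_⟩
    rcases hB.2 r (h hr) hne' with ⟨a, ha⟩
    rcases Finset.mem_inter.1 ha with ⟨har, haB⟩
    refine ⟨a, Finset.mem_inter.2 ⟨har, Finset.mem_inter.2 ⟨haB, ?_⟩⟩⟩
    exact Finset.mem_biUnion.2 ⟨r, hr, har⟩
  calc beta T' ≤ (B ∩ attrs T').card := beta_le_of_cover hcov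
    _ ≤ B.card := Finset.card_le_card Finset.inter_subset_left
    _ = beta T := hBc

lemma Splus_subset (T : Finset Rule) : Splus T ⊆ T := Finset.filter_subset _ _

lemma I_SR_subset (T : Finset Rule) : I_SR T ⊆ T := by
  unfold I_SR; split
  · exact Finset.filter_subset _ _
  · exact Finset.Subset.refl _

lemma I_AD_subset (T : Finset Rule) : I_AD T ⊆ T := Finset.filter_subset _ _

lemma betaPlus_le_beta (T : Finset Rule) : betaPlus T ≤ beta T :=
  beta_mono (Splus_subset T)

lemma attrs_restrict_subset (S : Finset Rule) (α : Finset (ℕ × Option ℕ)) :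
    attrs (restrict S α) ⊆ attrs S := by
  intro a ha
  rcases Finset.mem_biUnion.1 ha with ⟨r, hr, har⟩
  rcases Finset.mem_image.1 hr with ⟨r', hr', rfl⟩
  have hr'S : r' ∈ S := (Finset.mem_filter.1 hr').1
  refine Finset.mem_biUnion.2 ⟨r', hr'S, ?_⟩
  rcases Finset.mem_image.1 har with ⟨p, hp, rfl⟩
  exact Finset.mem_image.2 ⟨p, (Finset.mem_filter.1 hp).1, rfl⟩

lemma empty_mem_ESys (S : Finset Rule) (ext : Bool) : (∅ : Finset (ℕ × Option ℕ)) ∈ ESys S ext := by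
  constructor
  · intro p hp; simp at hp
  · intro p hp; simp at hp

lemma VS_nonempty {S : Finset Rule} {a : ℕ} (ha : a ∈ attrs S) : (VS S a).Nonempty := by
  rcases Finset.mem_biUnion.1 ha with ⟨r, hr, har⟩
  rcases Finset.mem_image.1 har with ⟨p, hp, rfl⟩
  refine ⟨p.2, ?_⟩
  unfold VS
  exact Finset.mem_image.2 ⟨p, Finset.mem_filter.2 ⟨Finset.mem_biUnion.2 ⟨r, hr, hp⟩, rfl⟩, rfl⟩

lemma allowed_nonempty {S : Finset Rule} {a : ℕ} (ha : a ∈ attrs S) (ext : Bool) :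
    (allowed S ext a).Nonempty := by
  rcases VS_nonempty ha with ⟨v, hv⟩
  exact ⟨some v, Finset.mem_union_left _ (Finset.mem_image.2 ⟨v, hv, rfl⟩)⟩

lemma none_mem_allowed (S : Finset Rule) (a : ℕ) : none ∈ allowed S true a := by
  unfold allowed; simp
-- ===================== Path construction =====================

lemma pathEqs_cons (G : DGraph) {v : ℕ} {l : Option ℕ} {rest : List (ℕ × Option ℕ)} {a : ℕ}
    (h : G.label v = Sum.inl a) :
    G.pathEqs ((v, l) :: rest) = insert (a, l) (G.pathEqs rest) := by
  unfold DGraph.pathEqs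
  rw [List.filterMap_cons_some]
  · rw [List.toFinset_cons]
  · simp [h]

lemma pathEqs_nil (G : DGraph) : G.pathEqs [] = ∅ := rfl

def reach (G : DGraph) (v : ℕ) : Finset ℕ :=
  (Finset.range G.n).filter fun w => Relation.ReflTransGen G.step v w

lemma reach_card_lt {G : DGraph} (hac : G.Acyclic) {v w : ℕ} (hv : v < G.n) (hw : w < G.n)
    (hs : G.step v w) : (reach G w).card < (reach G v).card := by
  apply Finset.card_lt_card
  constructor
  · intro u hu
    rcases Finset.mem_filter.1 hu with ⟨hu1, hu2⟩
    exact Finset.mem_filter.2 ⟨hu1, Relation.ReflTransGen.head hs hu2⟩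
  · intro hsub
    have hv' : v ∈ reach G v :=
      Finset.mem_filter.2 ⟨Finset.mem_range.2 hv, Relation.ReflTransGen.refl⟩
    have hv'' : v ∈ reach G w := hsub hv'
    have : Relation.ReflTransGen G.step w v := (Finset.mem_filter.1 hv'').2
    exact hac v (Relation.TransGen.head' hs this)

set_option maxHeartbeats 1000000 in
lemma build_path {G : DGraph} {S : Finset Rule} {ext : Bool} (hG : G.IsDG S ext)
    {α : Finset (ℕ × Option ℕ)} (hα : α ∈ ESys S ext) :
    ∀ k v, (reach G v).card ≤ k → v < G.n → ∀ E : Finset (ℕ × Option ℕ),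
    ConsistentE (E ∪ α) → (∀ q ∈ E, q.2 ∈ allowed S ext q.1) →
    (∀ q ∈ E, ext = true → q ∈ α ∨ q.2 = none) →
    ∃ p t, G.chainFrom v p t ∧ G.IsTerminal t ∧ t < G.n ∧
      ConsistentE (E ∪ G.pathEqs p ∪ α) ∧
      (∀ q ∈ G.pathEqs p, q.2 ∈ allowed S ext q.1) ∧
      (∀ q ∈ G.pathEqs p, ext = true → q ∈ α ∨ q.2 = none) := by
  intro k
  induction k with
  | zero =>
    intro v hk hv E _ _ _
    exfalso
    have hv' : v ∈ reach G v :=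
      Finset.mem_filter.2 ⟨Finset.mem_range.2 hv, Relation.ReflTransGen.refl⟩
    have := Finset.card_pos.2 ⟨v, hv'⟩
    omega
  | succ k ih =>
    intro v hk hv E hcons hallow hext
    by_cases ht : G.IsTerminal v
    · refine ⟨[], v, rfl, ht, hv, ?_, ?_, ?_⟩
      · rw [pathEqs_nil, Finset.union_empty]; exact hcons
      · intro q hq; simp [pathEqs_nil] at hq
      · intro q hq; simp [pathEqs_nil] at hq
    · have hnode := hG.2.2.2 v hv
      rw [if_neg ht] at hnode
      obtain ⟨a, hlab, haS, hiff, -⟩ := hnode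
      obtain ⟨l, F1, F2, F3⟩ : ∃ l, l ∈ allowed S ext a ∧
          (∀ q ∈ E ∪ α, q.1 = a → q.2 = l) ∧ (ext = true → (a, l) ∈ α ∨ l = none) := by
        by_cases hEα : ∃ w, (a, w) ∈ E ∪ α
        · obtain ⟨w, hw⟩ := hEα
          refine ⟨w, ?_, ?_, ?_⟩
          · rcases Finset.mem_union.1 hw with h | h
            · exact hallow (a, w) h
            · exact (hα.2 (a, w) h).2
          · intro q hq hq1
            exact hcons q hq (a, w) hw hq1
          · intro hxt
            rcases Finset.mem_union.1 hw with h | h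
            · rcases hext (a, w) h hxt with h' | h'
              · exact Or.inl h'
              · exact Or.inr h'
            · exact Or.inl h
        · cases ext with
          | true =>
            refine ⟨none, none_mem_allowed S a, ?_, fun _ => Or.inr rfl⟩
            intro q hq hq1
            exact absurd ⟨q.2, by rwa [← hq1, Prod.mk.eta]⟩ hEα
          | false =>
            obtain ⟨δ, hδ⟩ := VS_nonempty haS
            refine ⟨some δ, Finset.mem_union_left _ (Finset.mem_image.2 ⟨δ, hδ, rfl⟩), ?_,
              fun h => by simp at h⟩
            intro q hq hq1
            exact absurd ⟨q.2, by rwa [← hq1, Prod.mk.eta]⟩ hEα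
      obtain ⟨w, hvw⟩ := (hiff l).2 F1
      have hwn : w < G.n := (hG.2.1 _ hvw).2
      have hstep : G.step v w := ⟨l, hvw⟩
      have hcard : (reach G w).card ≤ k := by
        have := reach_card_lt hG.2.2.1 hv hwn hstep
        omega
      have hcons' : ConsistentE (insert (a, l) E ∪ α) := by
        rw [Finset.insert_union]
        intro p hp q hq hpq
        rcases Finset.mem_insert.1 hp with rfl | hp' <;>
          rcases Finset.mem_insert.1 hq with h | hq'
        · rw [h]
        · exact (F2 q hq' hpq.symm).symm
        · subst h; exact F2 p hp' hpq
        · exact hcons p hp' q hq' hpq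
      have hallow' : ∀ q ∈ insert (a, l) E, q.2 ∈ allowed S ext q.1 := by
        intro q hq
        rcases Finset.mem_insert.1 hq with rfl | hq'
        · exact F1
        · exact hallow _ hq'
      have hext' : ∀ q ∈ insert (a, l) E, ext = true → q ∈ α ∨ q.2 = none := by
        intro q hq hxt
        rcases Finset.mem_insert.1 hq with rfl | hq'
        · exact F3 hxt
        · exact hext _ hq' hxt
      obtain ⟨p', t, hchain, hterm, htn, hc', ha', he'⟩ :=
        ih w hcard hwn (insert (a, l) E) hcons' hallow' hext'
      refine ⟨(v, l) :: p', t, ⟨rfl, w, hvw, hchain⟩, hterm, htn, ?_, ?_, ?_⟩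
      · rw [pathEqs_cons G hlab]
        have : E ∪ insert (a, l) (G.pathEqs p') = insert (a, l) E ∪ G.pathEqs p' := by
          rw [Finset.union_insert, Finset.insert_union]
        rw [this]; exact hc'
      · intro q hq
        rw [pathEqs_cons G hlab] at hq
        rcases Finset.mem_insert.1 hq with rfl | hq'
        · exact F1
        · exact ha' _ hq'
      · intro q hq hxt
        rw [pathEqs_cons G hlab] at hq
        rcases Finset.mem_insert.1 hq with rfl | hq'
        · exact F3 hxt
        · exact he' _ hq' hxt

lemma exists_good_path {G : DGraph} {S : Finset Rule} {ext : Bool} (hG : G.IsDG S ext)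
    {α : Finset (ℕ × Option ℕ)} (hα : α ∈ ESys S ext) :
    ∃ p t, G.IsCompletePath p t ∧ ConsistentE (G.pathEqs p ∪ α) ∧
      (∀ q ∈ G.pathEqs p, ext = true → q ∈ α ∨ q.2 = none) := by
  obtain ⟨p, t, hchain, hterm, htn, hcons, -, hext⟩ :=
    build_path hG hα (reach G G.root).card G.root le_rfl hG.1 ∅
      (by rw [Finset.empty_union]; exact hα.1)
      (by intro q hq; simp at hq) (by intro q hq; simp at hq)
  rw [Finset.empty_union] at hcons
  exact ⟨p, t, ⟨hchain, hterm, htn⟩, hcons, hext⟩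
-- ===================== Depth bounds =====================

lemma chain_rtg {G : DGraph} : ∀ (p : List (ℕ × Option ℕ)) (v t : ℕ), G.chainFrom v p t →
    ∀ u ∈ p.map Prod.fst, Relation.ReflTransGen G.step v u := by
  intro p
  induction p with
  | nil => intro v t _ u hu; simp at hu
  | cons e rest ihp =>
    intro v t hc u hu
    obtain ⟨he1, w, hw, hrest⟩ := hc
    rcases List.mem_map.1 hu with ⟨e', he', rfl⟩
    rcases List.mem_cons.1 he' with rfl | he'' 
    · rw [he1]
    · exact Relation.ReflTransGen.head ⟨e.2, hw⟩
        (ihp w t hrest _ (List.mem_map.2 ⟨e', he'', rfl⟩))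

lemma chain_nodup {G : DGraph} (hac : G.Acyclic) :
    ∀ (p : List (ℕ × Option ℕ)) (v t : ℕ), G.chainFrom v p t → (p.map Prod.fst).Nodup := by
  intro p
  induction p with
  | nil => intro v t _; simp
  | cons e rest ihp =>
    intro v t hc
    obtain ⟨he1, w, hw, hrest⟩ := hc
    rw [List.map_cons, List.nodup_cons]
    refine ⟨?_, ihp w t hrest⟩
    intro hmem
    have h1 : Relation.ReflTransGen G.step w e.1 := chain_rtg rest w t hrest _ hmem
    rw [he1] at *
    exact hac v (Relation.TransGen.head' ⟨e.2, hw⟩ h1)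

lemma chain_lt {G : DGraph} {S : Finset Rule} {ext : Bool} (hG : G.IsDG S ext) :
    ∀ (p : List (ℕ × Option ℕ)) (v t : ℕ), G.chainFrom v p t → v < G.n →
      ∀ u ∈ p.map Prod.fst, u < G.n := by
  intro p
  induction p with
  | nil => intro v t _ _ u hu; simp at hu
  | cons e rest ihp =>
    intro v t hc hv u hu
    obtain ⟨he1, w, hw, hrest⟩ := hc
    rcases List.mem_map.1 hu with ⟨e', he', rfl⟩
    rcases List.mem_cons.1 he' with rfl | he''
    · rw [he1]; exact hv
    · exact ihp w t hrest ((hG.2.1 _ hw).2) _ (List.mem_map.2 ⟨e', he'', rfl⟩)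

lemma complete_path_length_le {G : DGraph} {S : Finset Rule} {ext : Bool} (hG : G.IsDG S ext)
    {p : List (ℕ × Option ℕ)} {t : ℕ} (hcp : G.IsCompletePath p t) : p.length ≤ G.n := by
  obtain ⟨hchain, _, _⟩ := hcp
  have hnd : (p.map Prod.fst).Nodup := chain_nodup hG.2.2.1 p G.root t hchain
  have hlt : ∀ u ∈ p.map Prod.fst, u < G.n := chain_lt hG p G.root t hchain hG.1
  have : (p.map Prod.fst).toFinset ⊆ Finset.range G.n := by
    intro u hu
    exact Finset.mem_range.2 (hlt u (List.mem_toFinset.1 hu))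
  have hcard := Finset.card_le_card this
  rw [List.toFinset_card_of_nodup hnd, Finset.card_range, List.length_map] at hcard
  exact hcard

lemma length_le_depth {G : DGraph} {S : Finset Rule} {ext : Bool} (hG : G.IsDG S ext)
    {p : List (ℕ × Option ℕ)} {t : ℕ} (hcp : G.IsCompletePath p t) : p.length ≤ G.depth := by
  apply le_csSup
  · exact ⟨G.n, fun m ⟨p', t', hcp', hl⟩ => hl ▸ complete_path_length_le hG hcp'⟩
  · exact ⟨p, t, hcp, rfl⟩

lemma pathEqs_card_le (G : DGraph) (p : List (ℕ × Option ℕ)) :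
    (G.pathEqs p).card ≤ p.length := by
  unfold DGraph.pathEqs
  calc _ ≤ (p.filterMap fun e =>
      Sum.elim (fun a => some (a, e.2)) (fun _ => none) (G.label e.1)).length :=
        List.toFinset_card_le _
    _ ≤ p.length := List.length_filterMap_le _ _
-- ===================== Cover lemmas =====================

lemma consistent_liftK {r : Rule} (hwfr : r.WF) : ConsistentE (liftK r.K) := by
  intro p hp q hq hpq
  obtain ⟨y, hy, rfl⟩ := Finset.mem_image.1 hp
  obtain ⟨z, hz, rfl⟩ := Finset.mem_image.1 hq
  simp only at hpq ⊢
  rw [hwfr y hy z hz hpq]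

lemma merge_consistent {r : Rule} (hwfr : r.WF) {K α : Finset (ℕ × Option ℕ)}
    (hKα : ConsistentE (K ∪ α)) (hdisj : ∀ a ∈ (r.restrict α).attrs, a ∉ K.image Prod.fst) :
    ConsistentE (liftK r.K ∪ K) := by
  have key : ∀ x ∈ liftK r.K, ∀ q ∈ K, x.1 = q.1 → x.2 = q.2 := by
    intro x hx q hq h1
    obtain ⟨y, hy, rfl⟩ := Finset.mem_image.1 hx
    by_cases hyα : (y.1, some y.2) ∈ α
    · exact (hKα q (Finset.mem_union.2 (Or.inl hq)) (y.1, some y.2)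
        (Finset.mem_union.2 (Or.inr hyα)) h1.symm).symm
    · exfalso
      have hmem : y.1 ∈ (r.restrict α).attrs := by
        refine Finset.mem_image.2 ⟨y, ?_, rfl⟩
        exact Finset.mem_filter.2 ⟨hy, hyα⟩
      exact hdisj y.1 hmem (Finset.mem_image.2 ⟨q, hq, by rw [← h1]⟩)
  intro p hp q hq hpq
  rcases Finset.mem_union.1 hp with hp' | hp' <;> rcases Finset.mem_union.1 hq with hq' | hq'
  · exact consistent_liftK hwfr p hp' q hq' hpq
  · exact key p hp' q hq' hpq
  · exact (key q hq' p hp' hpq.symm).symm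
  · exact hKα p (Finset.mem_union.2 (Or.inl hp')) q (Finset.mem_union.2 (Or.inl hq')) hpq

lemma mem_restrict {S : Finset Rule} {α : Finset (ℕ × Option ℕ)} {x : Rule} :
    x ∈ restrict S α ↔ ∃ r ∈ S, ConsistentE (liftK r.K ∪ α) ∧ x = r.restrict α := by
  unfold restrict
  constructor
  · intro hx
    obtain ⟨r, hr, rfl⟩ := Finset.mem_image.1 hx
    obtain ⟨hrS, hrc⟩ := Finset.mem_filter.1 hr
    exact ⟨r, hrS, hrc, rfl⟩
  · rintro ⟨r, hrS, hrc, rfl⟩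
    exact Finset.mem_image.2 ⟨r, Finset.mem_filter.2 ⟨hrS, hrc⟩, rfl⟩

lemma termSet_subset {G : DGraph} {S : Finset Rule} {ext : Bool} (hG : G.IsDG S ext)
    {t : ℕ} (ht : G.IsTerminal t) (htn : t < G.n) : G.termSet t ⊆ S := by
  have := hG.2.2.2 t htn
  rw [if_pos ht] at this
  obtain ⟨Z, hlab, hZS⟩ := this
  unfold DGraph.termSet
  rw [hlab]
  exact hZS

lemma restrict_len_zero {r' : Rule} {K α : Finset (ℕ × Option ℕ)}
    (hsub : liftK r'.K ⊆ K) (hextP : ∀ q ∈ K, q ∈ α ∨ q.2 = none) :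
    (r'.restrict α).len = 0 := by
  unfold Rule.restrict Rule.len
  rw [Finset.card_eq_zero, Finset.filter_eq_empty_iff]
  intro y hy
  have h1 : (y.1, some y.2) ∈ K := hsub (Finset.mem_image.2 ⟨y, hy, rfl⟩)
  rcases hextP (y.1, some y.2) h1 with h | h
  · simpa using h
  · simp at h

lemma attrs_nonempty_len {x : Rule} (h : x.attrs.Nonempty) : x.len ≠ 0 := by
  obtain ⟨a, ha⟩ := h
  obtain ⟨y, hy, rfl⟩ := Finset.mem_image.1 ha
  unfold Rule.len
  have : 0 < x.K.card := Finset.card_pos.2 ⟨y, hy⟩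
  omega

/-- The attributes of a rule included in the path equations give a hit. -/
lemma hit_of_liftK_subset {x r : Rule} {α K : Finset (ℕ × Option ℕ)}
    (hx : x = r.restrict α) (hsub : liftK r.K ⊆ K) (hne : x.attrs.Nonempty) :
    ∃ a ∈ x.attrs, a ∈ K.image Prod.fst := by
  obtain ⟨a, ha⟩ := hne
  refine ⟨a, ha, ?_⟩
  obtain ⟨y, hy, rfl⟩ := Finset.mem_image.1 ha
  have hyK : y ∈ r.K := by
    rw [hx] at hy
    exact (Finset.mem_filter.1 hy).1
  exact Finset.mem_image.2 ⟨(y.1, some y.2), hsub (Finset.mem_image.2 ⟨y, hyK, rfl⟩), rfl⟩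

lemma beta_le_depth_of_hits {G : DGraph} {S : Finset Rule} {ext : Bool} (hG : G.IsDG S ext)
    {p : List (ℕ × Option ℕ)} {t : ℕ} (hcp : G.IsCompletePath p t) (T : Finset Rule)
    (hits : ∀ x ∈ T, x.attrs.Nonempty → ∃ a ∈ x.attrs, a ∈ (G.pathEqs p).image Prod.fst) :
    beta T ≤ G.depth := by
  set B := (G.pathEqs p).image Prod.fst ∩ attrs T with hB
  have hcov : IsNodeCover T B := by
    refine ⟨Finset.inter_subset_right, fun x hx hne => ?_⟩
    obtain ⟨a, hax, haK⟩ := hits x hx hne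
    exact ⟨a, Finset.mem_inter.2 ⟨hax, Finset.mem_inter.2
      ⟨haK, Finset.mem_biUnion.2 ⟨x, hx, hax⟩⟩⟩⟩
  calc beta T ≤ B.card := beta_le_of_cover hcov
    _ ≤ ((G.pathEqs p).image Prod.fst).card := Finset.card_le_card Finset.inter_subset_left
    _ ≤ (G.pathEqs p).card := Finset.card_image_le
    _ ≤ p.length := pathEqs_card_le G p
    _ ≤ G.depth := length_le_depth hG hcp
-- ===================== Full tree construction =====================

def AL (S : Finset Rule) : List ℕ := (attrs S).sort (· ≤ ·)

lemma getD_AL_mem {S : Finset Rule} {i : ℕ} (h : i < (AL S).length) :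
    (AL S).getD i 0 ∈ attrs S := by
  rw [List.getD_eq_getElem _ _ h]
  exact (Finset.mem_sort (α := ℕ) (· ≤ ·)).1 (List.getElem_mem h)

def lvl (S : Finset Rule) (ext : Bool) : ℕ → Finset (List (Option ℕ))
  | 0 => {[]}
  | j+1 => (lvl S ext j).biUnion fun l =>
      (allowed S ext ((AL S).getD j 0)).image fun v => l ++ [v]

lemma length_of_mem_lvl {S : Finset Rule} {ext : Bool} :
    ∀ {j : ℕ} {l : List (Option ℕ)}, l ∈ lvl S ext j → l.length = j := by
  intro j
  induction j with
  | zero => intro l hl; rw [lvl, Finset.mem_singleton] at hl; simp [hl]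
  | succ j ih =>
    intro l hl
    rw [lvl, Finset.mem_biUnion] at hl
    obtain ⟨m, hm, hl⟩ := hl
    obtain ⟨v, hv, rfl⟩ := Finset.mem_image.1 hl
    simp [ih hm]

lemma mem_lvl_succ_iff {S : Finset Rule} {ext : Bool} {j : ℕ} {l : List (Option ℕ)} :
    l ∈ lvl S ext (j+1) ↔ ∃ m ∈ lvl S ext j,
      ∃ v ∈ allowed S ext ((AL S).getD j 0), l = m ++ [v] := by
  rw [lvl, Finset.mem_biUnion]
  constructor
  · rintro ⟨m, hm, hl⟩
    obtain ⟨v, hv, rfl⟩ := Finset.mem_image.1 hl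
    exact ⟨m, hm, v, hv, rfl⟩
  · rintro ⟨m, hm, v, hv, rfl⟩
    exact ⟨m, hm, Finset.mem_image.2 ⟨v, hv, rfl⟩⟩

def nodes (S : Finset Rule) (ext : Bool) : Finset (List (Option ℕ)) :=
  (Finset.range ((AL S).length + 1)).biUnion (lvl S ext)

lemma mem_nodes_iff {S : Finset Rule} {ext : Bool} {l : List (Option ℕ)} :
    l ∈ nodes S ext ↔ ∃ j ≤ (AL S).length, l ∈ lvl S ext j := by
  unfold nodes
  rw [Finset.mem_biUnion]
  constructor
  · rintro ⟨j, hj, hl⟩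
    exact ⟨j, Nat.lt_succ_iff.1 (Finset.mem_range.1 hj), hl⟩
  · rintro ⟨j, hj, hl⟩
    exact ⟨j, Finset.mem_range.2 (Nat.lt_succ_iff.2 hj), hl⟩

lemma nil_mem_nodes (S : Finset Rule) (ext : Bool) : [] ∈ nodes S ext :=
  mem_nodes_iff.2 ⟨0, Nat.zero_le _, by rw [lvl]; exact Finset.mem_singleton_self _⟩

lemma mem_nodes_spec {S : Finset Rule} {ext : Bool} {l : List (Option ℕ)} (hl : l ∈ nodes S ext) :
    l.length ≤ (AL S).length ∧ l ∈ lvl S ext l.length := by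
  obtain ⟨j, hj, hlv⟩ := mem_nodes_iff.1 hl
  have := length_of_mem_lvl hlv
  subst this
  exact ⟨hj, hlv⟩

lemma nodes_closure {S : Finset Rule} {ext : Bool} {l : List (Option ℕ)} {v : Option ℕ}
    (hl : l ∈ nodes S ext) (hlen : l.length < (AL S).length)
    (hv : v ∈ allowed S ext ((AL S).getD l.length 0)) : l ++ [v] ∈ nodes S ext := by
  obtain ⟨-, hlv⟩ := mem_nodes_spec hl
  refine mem_nodes_iff.2 ⟨l.length + 1, hlen, ?_⟩
  exact mem_lvl_succ_iff.2 ⟨l, hlv, v, hv, rfl⟩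

def codes (S : Finset Rule) (ext : Bool) : Finset ℕ :=
  (nodes S ext).image Encodable.encode

def isoC (S : Finset Rule) (ext : Bool) : Fin (codes S ext).card ≃o
    {x // x ∈ codes S ext} := (codes S ext).orderIsoOfFin rfl

def idx (S : Finset Rule) (ext : Bool) (l : List (Option ℕ)) : ℕ :=
  if h : Encodable.encode l ∈ codes S ext then ((isoC S ext).symm ⟨_, h⟩ : Fin _) else 0

def dec (S : Finset Rule) (ext : Bool) (v : ℕ) : List (Option ℕ) :=
  if h : v < (codes S ext).card
  then (Encodable.decode (((isoC S ext) ⟨v, h⟩ : {x // x ∈ codes S ext}) : ℕ)).getD []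
  else []

lemma idx_lt {S : Finset Rule} {ext : Bool} {l : List (Option ℕ)} (hl : l ∈ nodes S ext) :
    idx S ext l < (codes S ext).card := by
  have hc : Encodable.encode l ∈ codes S ext := Finset.mem_image.2 ⟨l, hl, rfl⟩
  rw [idx, dif_pos hc]
  exact Fin.is_lt _

lemma dec_idx {S : Finset Rule} {ext : Bool} {l : List (Option ℕ)} (hl : l ∈ nodes S ext) :
    dec S ext (idx S ext l) = l := by
  have hc : Encodable.encode l ∈ codes S ext := Finset.mem_image.2 ⟨l, hl, rfl⟩
  rw [idx, dif_pos hc, dec, dif_pos (Fin.is_lt _)]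
  have h1 : (⟨((isoC S ext).symm ⟨_, hc⟩ : Fin _), Fin.is_lt _⟩ : Fin (codes S ext).card)
      = (isoC S ext).symm ⟨_, hc⟩ := rfl
  rw [h1, OrderIso.apply_symm_apply]
  rw [Encodable.encodek]
  rfl

lemma dec_lt {S : Finset Rule} {ext : Bool} {v : ℕ} (h : v < (codes S ext).card) :
    dec S ext v ∈ nodes S ext ∧ idx S ext (dec S ext v) = v := by
  obtain ⟨l, hl, hel⟩ := Finset.mem_image.1 ((isoC S ext ⟨v, h⟩).2)
  have hdec : dec S ext v = l := by
    rw [dec, dif_pos h, ← hel, Encodable.encodek]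
    rfl
  rw [hdec]
  refine ⟨hl, ?_⟩
  have hc : Encodable.encode l ∈ codes S ext := Finset.mem_image.2 ⟨l, hl, rfl⟩
  rw [idx, dif_pos hc]
  have h2 : (⟨Encodable.encode l, hc⟩ : {x // x ∈ codes S ext}) = isoC S ext ⟨v, h⟩ :=
    Subtype.ext hel
  rw [h2, OrderIso.symm_apply_apply]

lemma idx_inj {S : Finset Rule} {ext : Bool} {l m : List (Option ℕ)} (hl : l ∈ nodes S ext)
    (hm : m ∈ nodes S ext) (h : idx S ext l = idx S ext m) : l = m := by
  rw [← dec_idx hl, h, dec_idx hm]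

def labelF (S : Finset Rule) (ext : Bool) (v : ℕ) : ℕ ⊕ Finset Rule :=
  if (dec S ext v).length < (AL S).length
  then Sum.inl ((AL S).getD (dec S ext v).length 0)
  else Sum.inr (S.filter fun r => liftK r.K ⊆ ((AL S).zip (dec S ext v)).toFinset)

def edgesF (S : Finset Rule) (ext : Bool) : Finset (ℕ × Option ℕ × ℕ) :=
  ((nodes S ext).filter fun l => l.length < (AL S).length).biUnion
    fun l => (allowed S ext ((AL S).getD l.length 0)).image
      fun v => (idx S ext l, v, idx S ext (l ++ [v]))

def Gfull (S : Finset Rule) (ext : Bool) : DGraph :=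
  ⟨(codes S ext).card, idx S ext [], labelF S ext, edgesF S ext⟩

lemma Gfull_n (S : Finset Rule) (ext : Bool) : (Gfull S ext).n = (codes S ext).card := rfl
lemma Gfull_root (S : Finset Rule) (ext : Bool) : (Gfull S ext).root = idx S ext [] := rfl
lemma Gfull_label (S : Finset Rule) (ext : Bool) : (Gfull S ext).label = labelF S ext := rfl
lemma Gfull_edges (S : Finset Rule) (ext : Bool) : (Gfull S ext).edges = edgesF S ext := rfl

lemma mem_edgesF {S : Finset Rule} {ext : Bool} {e : ℕ × Option ℕ × ℕ} :
    e ∈ edgesF S ext ↔ ∃ l ∈ nodes S ext, l.length < (AL S).length ∧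
      ∃ v ∈ allowed S ext ((AL S).getD l.length 0), e = (idx S ext l, v, idx S ext (l ++ [v])) := by
  unfold edgesF
  rw [Finset.mem_biUnion]
  constructor
  · rintro ⟨l, hl, he⟩
    obtain ⟨hl1, hl2⟩ := Finset.mem_filter.1 hl
    obtain ⟨v, hv, rfl⟩ := Finset.mem_image.1 he
    exact ⟨l, hl1, hl2, v, hv, rfl⟩
  · rintro ⟨l, hl1, hl2, v, hv, rfl⟩
    exact ⟨l, Finset.mem_filter.2 ⟨hl1, hl2⟩, Finset.mem_image.2 ⟨v, hv, rfl⟩⟩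

lemma isTerminal_of_max {S : Finset Rule} {ext : Bool} {l : List (Option ℕ)}
    (hl : l ∈ nodes S ext) (hlen : ¬ l.length < (AL S).length) :
    (Gfull S ext).IsTerminal (idx S ext l) := by
  intro e he
  rw [Gfull_edges] at he
  obtain ⟨m, hm, hmlen, v, hv, rfl⟩ := mem_edgesF.1 he
  intro heq
  exact hlen (idx_inj hm hl heq ▸ hmlen)

lemma not_isTerminal_of_lt {S : Finset Rule} {ext : Bool} {l : List (Option ℕ)}
    (hl : l ∈ nodes S ext) (hlen : l.length < (AL S).length) :
    ¬ (Gfull S ext).IsTerminal (idx S ext l) := by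
  intro ht
  obtain ⟨v, hv⟩ := allowed_nonempty (getD_AL_mem hlen) ext
  have he : (idx S ext l, v, idx S ext (l ++ [v])) ∈ (Gfull S ext).edges := by
    rw [Gfull_edges]
    exact mem_edgesF.2 ⟨l, hl, hlen, v, hv, rfl⟩
  exact ht _ he rfl
lemma step_len {S : Finset Rule} {ext : Bool} {u w : ℕ} (h : (Gfull S ext).step u w) :
    (dec S ext u).length < (dec S ext w).length := by
  obtain ⟨l0, he⟩ := h
  rw [Gfull_edges] at he
  obtain ⟨m, hm, hmlen, v, hv, heq⟩ := mem_edgesF.1 he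
  have h1 : u = idx S ext m := congrArg Prod.fst heq
  have h3 : w = idx S ext (m ++ [v]) := congrArg (fun q => q.2.2) heq
  rw [h1, h3, dec_idx hm, dec_idx (nodes_closure hm hmlen hv)]
  simp

lemma transGen_lt {μ : ℕ → ℕ} {a b : ℕ} (h : Relation.TransGen (fun x y => μ x < μ y) a b) :
    μ a < μ b := by
  induction h with
  | single h => exact h
  | tail _ h ih => exact lt_trans ih h

lemma acyclic_Gfull (S : Finset Rule) (ext : Bool) : (Gfull S ext).Acyclic := by
  intro v hv
  have h2 : Relation.TransGen (fun a b => (dec S ext a).length < (dec S ext b).length) v v :=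
    Relation.TransGen.mono (fun a b hab => step_len hab) v v hv
  exact Nat.lt_irrefl _ (transGen_lt (μ := fun a => (dec S ext a).length) h2)

lemma isDG_Gfull (S : Finset Rule) (ext : Bool) : (Gfull S ext).IsDG S ext := by
  refine ⟨idx_lt (nil_mem_nodes S ext), ?_, acyclic_Gfull S ext, ?_⟩
  · intro e he
    rw [Gfull_edges] at he
    obtain ⟨m, hm, hmlen, v, hv, rfl⟩ := mem_edgesF.1 he
    exact ⟨idx_lt hm, idx_lt (nodes_closure hm hmlen hv)⟩
  · intro v hv
    rw [Gfull_n] at hv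
    obtain ⟨hdn, hid⟩ := dec_lt hv
    by_cases hlen : (dec S ext v).length < (AL S).length
    · have hnt : ¬ (Gfull S ext).IsTerminal v := by
        rw [← hid]; exact not_isTerminal_of_lt hdn hlen
      rw [if_neg hnt]
      refine ⟨(AL S).getD (dec S ext v).length 0, ?_, getD_AL_mem hlen, ?_, ?_⟩
      · rw [Gfull_label, labelF, if_pos hlen]
      · intro l0
        constructor
        · rintro ⟨w, hw⟩
          rw [Gfull_edges] at hw
          obtain ⟨m, hm, hmlen, v0, hv0, heq⟩ := mem_edgesF.1 hw
          have h1 : v = idx S ext m := congrArg Prod.fst heq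
          have hmd : m = dec S ext v := by
            rw [h1, dec_idx hm]
          have h2 : l0 = v0 := congrArg (fun q => q.2.1) heq
          rw [h2, ← hmd]
          exact hv0
        · intro hl0
          refine ⟨idx S ext (dec S ext v ++ [l0]), ?_⟩
          rw [Gfull_edges]
          refine mem_edgesF.2 ⟨dec S ext v, hdn, hlen, l0, hl0, ?_⟩
          rw [hid]
      · intro l0 w w' hw hw'
        rw [Gfull_edges] at hw hw'
        obtain ⟨m, hm, hmlen, v0, hv0, heq⟩ := mem_edgesF.1 hw
        obtain ⟨m', hm', hmlen', v0', hv0', heq'⟩ := mem_edgesF.1 hw'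
        have e1 : v = idx S ext m := congrArg Prod.fst heq
        have e1' : v = idx S ext m' := congrArg Prod.fst heq'
        have e2 : l0 = v0 := congrArg (fun q => q.2.1) heq
        have e2' : l0 = v0' := congrArg (fun q => q.2.1) heq'
        have e3 : w = idx S ext (m ++ [v0]) := congrArg (fun q => q.2.2) heq
        have e3' : w' = idx S ext (m' ++ [v0']) := congrArg (fun q => q.2.2) heq'
        have hmm : m = m' := idx_inj hm hm' (e1 ▸ e1')
        rw [e3, e3', hmm, ← e2, ← e2']
    · have ht : (Gfull S ext).IsTerminal v := by
        rw [← hid]; exact isTerminal_of_max hdn hlen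
      rw [if_pos ht]
      refine ⟨S.filter fun r => liftK r.K ⊆ ((AL S).zip (dec S ext v)).toFinset, ?_,
        Finset.filter_subset _ _⟩
      rw [Gfull_label, labelF, if_neg hlen]

lemma isTree_Gfull (S : Finset Rule) (ext : Bool) : (Gfull S ext).IsTree := by
  constructor
  · intro e he
    rw [Gfull_edges] at he
    obtain ⟨m, hm, hmlen, v, hv, rfl⟩ := mem_edgesF.1 he
    intro heq
    have := idx_inj (nodes_closure hm hmlen hv) (nil_mem_nodes S ext) heq
    simp at this
  · intro v hv hvr
    rw [Gfull_n] at hv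
    obtain ⟨hdn, hid⟩ := dec_lt hv
    set l := dec S ext v with hld
    have hlne : l ≠ [] := by
      intro h
      rw [h] at hid
      exact hvr (hid ▸ (Gfull_root S ext).symm)
    obtain ⟨j, hj⟩ : ∃ j, l.length = j + 1 :=
      ⟨l.length - 1, by have := List.length_pos_iff.2 hlne; omega⟩
    obtain ⟨hlen, hlv⟩ := mem_nodes_spec hdn
    rw [hj] at hlv
    obtain ⟨m, hm, v0, hv0, hdecomp⟩ := mem_lvl_succ_iff.1 hlv
    have hmlen : m.length = j := length_of_mem_lvl hm
    have hmnodes : m ∈ nodes S ext := mem_nodes_iff.2 ⟨j, by omega, hm⟩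
    have hmlt : m.length < (AL S).length := by omega
    have hv0' : v0 ∈ allowed S ext ((AL S).getD m.length 0) := by rw [hmlen]; exact hv0
    refine ⟨(idx S ext m, v0, v), ⟨?_, rfl⟩, ?_⟩
    · rw [Gfull_edges]
      refine mem_edgesF.2 ⟨m, hmnodes, hmlt, v0, hv0', ?_⟩
      rw [← hdecomp, hid]
    · rintro e' ⟨he', ht'⟩
      rw [Gfull_edges] at he'
      obtain ⟨m', hm', hmlen', u, hu, rfl⟩ := mem_edgesF.1 he'
      have htv : idx S ext (m' ++ [u]) = v := ht'
      have : m' ++ [u] = l := by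
        rw [← hid] at htv
        exact idx_inj (nodes_closure hm' hmlen' hu) hdn htv
      rw [hdecomp] at this
      obtain ⟨hm'm, hu'⟩ := List.append_inj' this rfl
      have huv0 : u = v0 := by injection hu'
      rw [hm'm, huv0] at htv ⊢
      rw [htv]
lemma chain_spec {S : Finset Rule} {ext : Bool} :
    ∀ (p : List (ℕ × Option ℕ)) (l : List (Option ℕ)) (t : ℕ), l ∈ nodes S ext →
    (Gfull S ext).chainFrom (idx S ext l) p t →
    dec S ext t = l ++ p.map Prod.snd ∧ (l ++ p.map Prod.snd) ∈ nodes S ext ∧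
    (Gfull S ext).pathEqs p = (((AL S).drop l.length).zip (p.map Prod.snd)).toFinset := by
  intro p
  induction p with
  | nil =>
    intro l t hl hc
    have ht : idx S ext l = t := hc
    subst ht
    refine ⟨by simp [dec_idx hl], by simpa using hl, ?_⟩
    rw [pathEqs_nil]
    simp
  | cons e rest ih =>
    intro l t hl hc
    obtain ⟨he1, w, hw, hrest⟩ := hc
    rw [Gfull_edges] at hw
    obtain ⟨m, hm, hmlen, v0, hv0, heq⟩ := mem_edgesF.1 hw
    have h1 : idx S ext l = idx S ext m := congrArg Prod.fst heq
    have hml : m = l := idx_inj hm hl h1.symm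
    subst hml
    have h2 : e.2 = v0 := congrArg (fun q => q.2.1) heq
    have h3 : w = idx S ext (m ++ [v0]) := congrArg (fun q => q.2.2) heq
    rw [← h2] at hv0 h3
    have hmem : m ++ [e.2] ∈ nodes S ext := nodes_closure hm hmlen hv0
    rw [h3] at hrest
    obtain ⟨ih1, ih2, ih3⟩ := ih (m ++ [e.2]) t hmem hrest
    have hformat : (m ++ [e.2]) ++ rest.map Prod.snd = m ++ (e :: rest).map Prod.snd := by
      rw [List.map_cons, List.append_assoc]
      rfl
    refine ⟨by rw [ih1, hformat], by rw [← hformat]; exact ih2, ?_⟩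
    have hlab : (Gfull S ext).label e.1 = Sum.inl ((AL S).getD m.length 0) := by
      rw [he1, Gfull_label, labelF, dec_idx hm, if_pos hmlen]
    rw [pathEqs_cons _ hlab, ih3]
    have hlen2 : (m ++ [e.2]).length = m.length + 1 := by simp
    rw [hlen2]
    rw [List.drop_eq_getElem_cons hmlen, List.map_cons, List.zip_cons_cons,
      List.toFinset_cons, List.getD_eq_getElem _ _ hmlen]

lemma solvesAR_Gfull (S : Finset Rule) (ext : Bool) : (Gfull S ext).SolvesAR S := by
  intro p t hcp hcons
  obtain ⟨hchain, hterm, htn⟩ := hcp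
  rw [Gfull_n] at htn
  obtain ⟨hdn, hid⟩ := dec_lt htn
  have hchain' : (Gfull S ext).chainFrom (idx S ext []) p t := hchain
  obtain ⟨hdec, hmem, hpeq⟩ := chain_spec p [] t (nil_mem_nodes S ext) hchain'
  rw [List.nil_append] at hdec hmem
  rw [List.length_nil, List.drop_zero] at hpeq
  have hnlt : ¬ (dec S ext t).length < (AL S).length := by
    intro hlt
    have hni := not_isTerminal_of_lt hdn hlt
    rw [hid] at hni
    exact hni hterm
  have hlen : (dec S ext t).length = (AL S).length := by
    have := (mem_nodes_spec hdn).1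
    omega
  have htermset : (Gfull S ext).termSet t =
      S.filter fun r => liftK r.K ⊆ ((AL S).zip (dec S ext t)).toFinset := by
    unfold DGraph.termSet
    rw [Gfull_label, labelF, if_neg hnlt]
    rfl
  have hpeq' : (Gfull S ext).pathEqs p = ((AL S).zip (dec S ext t)).toFinset := by
    rw [hpeq, hdec]
  constructor
  · intro r hr
    rw [htermset] at hr
    rw [hpeq']
    exact (Finset.mem_filter.1 hr).2
  · intro r hrS hrt hconsu
    rw [htermset] at hrt
    have hnsub : ¬ liftK r.K ⊆ ((AL S).zip (dec S ext t)).toFinset := by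
      intro hsub
      exact hrt (Finset.mem_filter.2 ⟨hrS, hsub⟩)
    obtain ⟨q, hqK, hqF⟩ := Finset.not_subset.1 hnsub
    obtain ⟨y, hy, rfl⟩ := Finset.mem_image.1 hqK
    have hy1 : y.1 ∈ attrs S :=
      Finset.mem_biUnion.2 ⟨r, hrS, Finset.mem_image.2 ⟨y, hy, rfl⟩⟩
    have hy1' : y.1 ∈ AL S := (Finset.mem_sort (α := ℕ) (· ≤ ·)).2 hy1
    obtain ⟨i, hi, hALi⟩ := List.mem_iff_getElem.1 hy1'
    have hziplen : i < ((AL S).zip (dec S ext t)).length := by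
      rw [List.length_zip, hlen]
      omega
    have hpair : ((AL S)[i], (dec S ext t)[i]'(by omega)) ∈
        ((AL S).zip (dec S ext t)).toFinset := by
      rw [List.mem_toFinset, ← List.getElem_zip (h := hziplen)]
      exact List.getElem_mem hziplen
    have hne : (dec S ext t)[i]'(by omega) ≠ some y.2 := by
      intro hco
      apply hqF
      rw [← hALi, ← hco]
      exact hpair
    have := hconsu (y.1, some y.2)
      (Finset.mem_union.2 (Or.inl (Finset.mem_image.2 ⟨y, hy, rfl⟩)))
      ((AL S)[i], (dec S ext t)[i]'(by omega))
      (Finset.mem_union.2 (Or.inr (by rw [hpeq']; exact hpair))) (by simp [hALi])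
    exact hne this.symm

lemma exists_solving_tree (S : Finset Rule) (ext : Bool) :
    ∃ G : DGraph, G.IsDG S ext ∧ G.IsTree ∧ G.SolvesAR S :=
  ⟨Gfull S ext, isDG_Gfull S ext, isTree_Gfull S ext, solvesAR_Gfull S ext⟩
-- ===================== Key per-α bounds =====================

lemma key_AR {G : DGraph} {S : Finset Rule} {ext : Bool} (hG : G.IsDG S ext)
    (hsol : G.SolvesAR S) (hwf : ∀ r ∈ S, r.WF) {α : Finset (ℕ × Option ℕ)}
    (hα : α ∈ ESys S ext) : beta (restrict S α) ≤ G.depth := by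
  obtain ⟨p, t, hcp, hK, hextP⟩ := exists_good_path hG hα
  apply beta_le_depth_of_hits hG hcp
  intro x hx hne
  obtain ⟨r, hrS, hrc, rfl⟩ := mem_restrict.1 hx
  by_contra hno
  push_neg at hno
  have hmerge := merge_consistent (hwf r hrS) hK hno
  have hKcons : ConsistentE (G.pathEqs p) := consistentE_mono Finset.subset_union_left hK
  obtain ⟨h1, h2⟩ := hsol p t hcp hKcons
  by_cases hrt : r ∈ G.termSet t
  · obtain ⟨a, hax, haK⟩ := hit_of_liftK_subset rfl (h1 r hrt) hne
    exact hno a hax haK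
  · exact h2 r hrS hrt hmerge

lemma liftK_subset_alpha {r' : Rule} {α K : Finset (ℕ × Option ℕ)}
    (hsub : liftK r'.K ⊆ K) (hextP : ∀ q ∈ K, q ∈ α ∨ q.2 = none) : liftK r'.K ⊆ α := by
  intro q hq
  rcases hextP q (hsub hq) with h | h
  · exact h
  · obtain ⟨y, hy, rfl⟩ := Finset.mem_image.1 hq
    simp at h

lemma key_EAD {G : DGraph} {S : Finset Rule} (hG : G.IsDG S true)
    (hsol : G.SolvesAD S) (hwf : ∀ r ∈ S, r.WF) {α : Finset (ℕ × Option ℕ)}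
    (hα : α ∈ ESys S true) : beta (I_AD (restrict S α)) ≤ G.depth := by
  obtain ⟨p, t, hcp, hK, hextP'⟩ := exists_good_path hG hα
  have hextP : ∀ q ∈ G.pathEqs p, q ∈ α ∨ q.2 = none := fun q hq => hextP' q hq rfl
  apply beta_le_depth_of_hits hG hcp
  intro x hx hne
  have hx' : x ∈ restrict S α := I_AD_subset _ hx
  have hD0 : x.rhs ∉ D0 (restrict S α) := by
    rcases (Finset.mem_filter.1 hx).2 with h | h
    · exact absurd h (attrs_nonempty_len hne)
    · exact h
  obtain ⟨r, hrS, hrc, hxr⟩ := mem_restrict.1 hx'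
  subst hxr
  by_contra hno
  push_neg at hno
  have hmerge := merge_consistent (hwf r hrS) hK hno
  have hKcons : ConsistentE (G.pathEqs p) := consistentE_mono Finset.subset_union_left hK
  obtain ⟨h1, h2⟩ := hsol p t hcp hKcons
  by_cases hrt : r ∈ G.termSet t
  · exact attrs_nonempty_len hne (restrict_len_zero (h1 r hrt) hextP)
  · by_cases hrhs : r.rhs ∈ (G.termSet t).image Rule.rhs
    · obtain ⟨r', hr't, hrr'⟩ := Finset.mem_image.1 hrhs
      have hsub' : liftK r'.K ⊆ G.pathEqs p := h1 r' hr't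
      have hsubα : liftK r'.K ⊆ α := liftK_subset_alpha hsub' hextP
      have hr'S : r' ∈ S := termSet_subset hG hcp.2.1 hcp.2.2 hr't
      have hcons' : ConsistentE (liftK r'.K ∪ α) :=
        consistentE_mono (Finset.union_subset hsubα (Finset.Subset.refl α)) hα.1
      have hmem' : r'.restrict α ∈ restrict S α := mem_restrict.2 ⟨r', hr'S, hcons', rfl⟩
      have hlen0 : (r'.restrict α).len = 0 := restrict_len_zero hsub' hextP
      refine hD0 ?_
      unfold D0
      exact Finset.mem_image.2 ⟨r'.restrict α, Finset.mem_filter.2 ⟨hmem', hlen0⟩,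
        by simpa [Rule.restrict] using hrr'⟩
    · exact h2 r hrS hrt hrhs hmerge

lemma key_ESR {G : DGraph} {S : Finset Rule} (hG : G.IsDG S true)
    (hsol : G.SolvesSR S) (hwf : ∀ r ∈ S, r.WF) {α : Finset (ℕ × Option ℕ)}
    (hα : α ∈ ESys S true) : beta (I_SR (restrict S α)) ≤ G.depth := by
  obtain ⟨p, t, hcp, hK, hextP'⟩ := exists_good_path hG hα
  have hextP : ∀ q ∈ G.pathEqs p, q ∈ α ∨ q.2 = none := fun q hq => hextP' q hq rfl
  apply beta_le_depth_of_hits hG hcp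
  intro x hx hne
  by_cases h0 : ∃ z ∈ restrict S α, z.len = 0
  · exfalso
    unfold I_SR at hx
    rw [if_pos h0] at hx
    exact attrs_nonempty_len hne (Finset.mem_filter.1 hx).2
  · have hx' : x ∈ restrict S α := I_SR_subset _ hx
    obtain ⟨r, hrS, hrc, hxr⟩ := mem_restrict.1 hx'
    subst hxr
    by_contra hno
    push_neg at hno
    have hmerge := merge_consistent (hwf r hrS) hK hno
    have hKcons : ConsistentE (G.pathEqs p) := consistentE_mono Finset.subset_union_left hK
    obtain ⟨h1, h2⟩ := hsol p t hcp hKcons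
    by_cases he : G.termSet t = ∅
    · exact h2 he r hrS hmerge
    · obtain ⟨r', hr't⟩ := Finset.nonempty_iff_ne_empty.2 he
      have hsub' : liftK r'.K ⊆ G.pathEqs p := h1 r' hr't
      have hsubα : liftK r'.K ⊆ α := liftK_subset_alpha hsub' hextP
      have hr'S : r' ∈ S := termSet_subset hG hcp.2.1 hcp.2.2 hr't
      have hcons' : ConsistentE (liftK r'.K ∪ α) :=
        consistentE_mono (Finset.union_subset hsubα (Finset.Subset.refl α)) hα.1
      exact h0 ⟨r'.restrict α, mem_restrict.2 ⟨r', hr'S, hcons', rfl⟩,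
        restrict_len_zero hsub' hextP⟩

-- ===================== Solves implications and tree existence =====================

lemma solvesAR_imp_AD {G : DGraph} {S : Finset Rule} (h : G.SolvesAR S) : G.SolvesAD S :=
  fun p t hcp hc => ⟨(h p t hcp hc).1, fun r hr hrt _ => (h p t hcp hc).2 r hr hrt⟩

lemma solvesAR_imp_SR {G : DGraph} {S : Finset Rule} (h : G.SolvesAR S) : G.SolvesSR S :=
  fun p t hcp hc => ⟨(h p t hcp hc).1, fun hemp r hr =>
    (h p t hcp hc).2 r hr (by rw [hemp]; exact Finset.notMem_empty r)⟩

-- ===================== Assembly =====================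

lemma beta_restrict_le_nPar (S : Finset Rule) (α : Finset (ℕ × Option ℕ)) :
    beta (restrict S α) ≤ nPar S :=
  le_trans (beta_le_card_attrs _) (Finset.card_le_card (attrs_restrict_subset S α))

lemma bdd_betaC (S : Finset Rule) (ext : Bool) :
    BddAbove {b | ∃ α ∈ ESys S ext, beta (restrict S α) = b} := by
  refine ⟨nPar S, ?_⟩
  rintro b ⟨α, hα, rfl⟩
  exact beta_restrict_le_nPar S α

lemma bdd_betaI (S : Finset Rule) (I : Finset Rule → Finset Rule) (hI : ∀ T, I T ⊆ T) :
    BddAbove {b | ∃ α ∈ ESys S true, beta (I (restrict S α)) = b} := by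
  refine ⟨nPar S, ?_⟩
  rintro b ⟨α, hα, rfl⟩
  exact le_trans (beta_mono (hI _)) (beta_restrict_le_nPar S α)

lemma betaCplus_le_betaC (S : Finset Rule) (ext : Bool) : betaCplus S ext ≤ betaC S ext := by
  apply csSup_le
  · exact ⟨betaPlus (restrict S ∅), ∅, empty_mem_ESys S ext, rfl⟩
  · rintro b ⟨α, hα, rfl⟩
    exact le_trans (betaPlus_le_beta _) (le_csSup (bdd_betaC S ext) ⟨α, hα, rfl⟩)

lemma betaIplus_le_betaI (S : Finset Rule) (I : Finset Rule → Finset Rule)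
    (hI : ∀ T, I T ⊆ T) : betaIplus S I ≤ betaI S I := by
  apply csSup_le
  · exact ⟨betaPlus (I (restrict S ∅)), ∅, empty_mem_ESys S true, rfl⟩
  · rintro b ⟨α, hα, rfl⟩
    exact le_trans (betaPlus_le_beta _) (le_csSup (bdd_betaI S I hI) ⟨α, hα, rfl⟩)

lemma betaC_le_depth {G : DGraph} {S : Finset Rule} {ext : Bool} (hG : G.IsDG S ext)
    (hsol : G.SolvesAR S) (hwf : ∀ r ∈ S, r.WF) : betaC S ext ≤ G.depth := by
  apply csSup_le
  · exact ⟨beta (restrict S ∅), ∅, empty_mem_ESys S ext, rfl⟩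
  · rintro b ⟨α, hα, rfl⟩
    exact key_AR hG hsol hwf hα

lemma betaC_le_hAR (S : Finset Rule) (hwf : ∀ r ∈ S, r.WF) : betaC S false ≤ h_AR S := by
  obtain ⟨G0, h1, h2, h3⟩ := exists_solving_tree S false
  obtain ⟨G, hG, hdep⟩ := Nat.sInf_mem (⟨G0.depth, G0, ⟨h1, h2, h3⟩, rfl⟩ :
    {m | ∃ G : DGraph, TreeSolvesAR S G ∧ G.depth = m}.Nonempty)
  rw [h_AR, ← hdep]
  exact betaC_le_depth hG.1 hG.2.2 hwf

lemma betaC_le_hEAR (S : Finset Rule) (hwf : ∀ r ∈ S, r.WF) : betaC S true ≤ h_EAR S := by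
  obtain ⟨G0, h1, h2, h3⟩ := exists_solving_tree S true
  obtain ⟨G, hG, hdep⟩ := Nat.sInf_mem (⟨G0.depth, G0, ⟨h1, h2, h3⟩, rfl⟩ :
    {m | ∃ G : DGraph, TreeSolvesEAR S G ∧ G.depth = m}.Nonempty)
  rw [h_EAR, ← hdep]
  exact betaC_le_depth hG.1 hG.2.2 hwf

lemma betaI_le_hEAD (S : Finset Rule) (hwf : ∀ r ∈ S, r.WF) : betaI S I_AD ≤ h_EAD S := by
  obtain ⟨G0, h1, h2, h3⟩ := exists_solving_tree S true
  obtain ⟨G, hG, hdep⟩ := Nat.sInf_mem (⟨G0.depth, G0, ⟨h1, h2, solvesAR_imp_AD h3⟩, rfl⟩ :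
    {m | ∃ G : DGraph, TreeSolvesEAD S G ∧ G.depth = m}.Nonempty)
  rw [h_EAD, ← hdep]
  apply csSup_le
  · exact ⟨beta (I_AD (restrict S ∅)), ∅, empty_mem_ESys S true, rfl⟩
  · rintro b ⟨α, hα, rfl⟩
    exact key_EAD hG.1 hG.2.2 hwf hα

lemma betaI_le_hESR (S : Finset Rule) (hwf : ∀ r ∈ S, r.WF) : betaI S I_SR ≤ h_ESR S := by
  obtain ⟨G0, h1, h2, h3⟩ := exists_solving_tree S true
  obtain ⟨G, hG, hdep⟩ := Nat.sInf_mem (⟨G0.depth, G0, ⟨h1, h2, solvesAR_imp_SR h3⟩, rfl⟩ :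
    {m | ∃ G : DGraph, TreeSolvesESR S G ∧ G.depth = m}.Nonempty)
  rw [h_ESR, ← hdep]
  apply csSup_le
  · exact ⟨beta (I_SR (restrict S ∅)), ∅, empty_mem_ESys S true, rfl⟩
  · rintro b ⟨α, hα, rfl⟩
    exact key_ESR hG.1 hG.2.2 hwf hα

/-- Lemma 14: for C ∈ {AR, EAR, EAD, ESR}, h_C(S) ≥ β_C(S) ≥ β_C⁺(S). -/
theorem statement_12 (S : Finset Rule) (hS : S.Nonempty) (hwf : ∀ r ∈ S, r.WF)
    (hn : 0 < nPar S) :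
    (beta_ARplus S ≤ beta_AR S ∧ beta_AR S ≤ h_AR S) ∧
    (beta_EARplus S ≤ beta_EAR S ∧ beta_EAR S ≤ h_EAR S) ∧
    (beta_EADplus S ≤ beta_EAD S ∧ beta_EAD S ≤ h_EAD S) ∧
    (beta_ESRplus S ≤ beta_ESR S ∧ beta_ESR S ≤ h_ESR S) := by
  refine ⟨⟨betaCplus_le_betaC S false, betaC_le_hAR S hwf⟩,
    ⟨betaCplus_le_betaC S true, betaC_le_hEAR S hwf⟩,
    ⟨betaIplus_le_betaI S I_AD I_AD_subset, betaI_le_hEAD S hwf⟩,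
    ⟨betaIplus_le_betaI S I_SR I_SR_subset, betaI_le_hESR S hwf⟩⟩

end DRS

end
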